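/- Let F(z) = z²/2 − 2z + log z. For every t > 0, the derivative with respect to t of Re(F(1 + t·e^{iπ/3})) equals −t²(2 + t)/(2(1 + t + t²)), which is strictly negative; hence t ↦ Re(F(1 + t·e^{iπ/3})) is strictly decreasing on (0,∞). -/

import Mathlib

/-- For `F z = z²/2 − 2z + log z` and `g t = Re (F (1 + t e^{iπ/3}))`, for every `t > 0`
the derivative of `g` at `t` equals `−t²(2+t)/(2(1+t+t²))`, which is negative; hence `g`
is strictly decreasing on `(0,∞)`. -/
theorem stmt_3 (F : ℂ → ℂ) (hF : ∀ z : ℂ, F z = z ^ 2 / 2 - 2 * z + Complex.log z)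
    (g : ℝ → ℝ)
    (hg : ∀ t : ℝ, g t =
      (F (1 + (t : ℂ) * Complex.exp (((Real.pi / 3 : ℝ) : ℂ) * Complex.I))).re) :
    (∀ t : ℝ, 0 < t →
        HasDerivAt g (-(t ^ 2 * (2 + t)) / (2 * (1 + t + t ^ 2))) t ∧
        -(t ^ 2 * (2 + t)) / (2 * (1 + t + t ^ 2)) < 0) ∧
    StrictAntiOn g (Set.Ioi (0 : ℝ)) := by
  have hsq3 : Real.sqrt 3 ^ 2 = 3 := Real.sq_sqrt (by norm_num)
  have hexp : Complex.exp (((Real.pi / 3 : ℝ) : ℂ) * Complex.I)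
      = Complex.ofReal (1/2) + Complex.ofReal (Real.sqrt 3 / 2) * Complex.I := by
    rw [Complex.exp_mul_I, ← Complex.ofReal_cos, ← Complex.ofReal_sin,
      Real.cos_pi_div_three, Real.sin_pi_div_three]
  have hpos : ∀ t : ℝ, 0 < 1 + t + t ^ 2 := fun t => by nlinarith [sq_nonneg (2*t+1)]
  have hgeq : ∀ t : ℝ, g t = (1 + t - t^2/2)/2 - 2 - t + Real.log (1 + t + t^2) / 2 := by
    intro t
    rw [hg, hF, hexp]
    have hns : Complex.normSq (1 + (t:ℂ) * (Complex.ofReal (1/2) + Complex.ofReal (Real.sqrt 3 / 2) * Complex.I)) = 1 + t + t^2 := by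
      simp [Complex.normSq_apply, Complex.add_re, Complex.add_im, Complex.mul_re, Complex.mul_im]
      nlinarith [hsq3]
    simp only [Complex.add_re, Complex.sub_re, Complex.div_re, Complex.mul_re, Complex.mul_im,
      Complex.log_re, Complex.norm_def, hns]
    rw [Real.log_sqrt (le_of_lt (hpos t))]
    simp [pow_two, Complex.add_re, Complex.add_im, Complex.mul_re, Complex.mul_im, Complex.normSq_apply]
    nlinarith [hsq3]
  have hderiv : ∀ t : ℝ, HasDerivAt g (-(t ^ 2 * (2 + t)) / (2 * (1 + t + t ^ 2))) t := by
    intro t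
    have hu : HasDerivAt (fun t : ℝ => 1 + t + t ^ 2) (1 + 2 * t) t := by
      have := ((hasDerivAt_id t).const_add 1).add (hasDerivAt_pow 2 t)
      simp at this; exact this
    have hlog : HasDerivAt (fun t : ℝ => Real.log (1 + t + t ^ 2)) ((1 + 2*t) / (1 + t + t^2)) t :=
      hu.log (ne_of_gt (hpos t))
    have hpoly : HasDerivAt (fun t : ℝ => (1 + t - t^2/2)/2 - 2 - t) ((1 - t)/2 - 1) t := by
      have h1 : HasDerivAt (fun t : ℝ => t ^ 2) (2 * t) t := by simpa using hasDerivAt_pow 2 t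
      have := ((((hasDerivAt_id t).const_add 1).sub (h1.div_const 2)).div_const 2).sub_const 2
        |>.sub (hasDerivAt_id t)
      refine this.congr_deriv ?_
      ring
    have := hpoly.add (hlog.div_const 2)
    have heq : g = fun t : ℝ => (1 + t - t^2/2)/2 - 2 - t + Real.log (1 + t + t^2) / 2 :=
      funext hgeq
    rw [heq]
    refine this.congr_deriv ?_
    have h0 : (1 + t + t^2) ≠ 0 := ne_of_gt (hpos t)
    field_simp
    ring
  refine ⟨fun t ht => ⟨hderiv t, ?_⟩, ?_⟩
  · apply div_neg_of_neg_of_pos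
    · nlinarith
    · nlinarith [hpos t]
  · apply strictAntiOn_of_deriv_neg (convex_Ioi 0)
    · exact fun x _ => ((hderiv x).differentiableAt).continuousAt.continuousWithinAt
    · intro x hx
      rw [interior_Ioi] at hx
      rw [(hderiv x).deriv]
      apply div_neg_of_neg_of_pos
      · nlinarith [hx.out]
      · nlinarith [hpos x]
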